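/- Every finite tree T with at least two vertices and exactly ℓ leaves can be partitioned into ℓ pairwise vertex-disjoint paths: there exist paths Q₁, …, Q_ℓ of T whose vertex sets are pairwise disjoint and whose union is the vertex set of T. -/

import Mathlib

/-- A (nonempty) path of a graph `G`, given as its list of vertices:
distinct vertices, consecutive ones adjacent in `G`; a single vertex counts as a path. -/
def IsPathList {V : Type*} (G : SimpleGraph V) (l : List V) : Prop :=
  l ≠ [] ∧ l.Nodup ∧ l.Chain' G.Adj

set_option linter.unusedSectionVars false
set_option linter.unnecessarySimpa false
set_option maxHeartbeats 1000000

open SimpleGraph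

namespace TLP

lemma split_unique {α : Type*} {w : α} :
    ∀ (a : List α) {b : List α} (c : List α) {d : List α},
      a ++ w :: b = c ++ w :: d → w ∉ a → w ∉ c → a = c ∧ b = d
  | [], b, [], d, h, _, _ => by simpa using h
  | [], b, x :: c, d, h, _, hc => by
      simp only [List.nil_append, List.cons_append, List.cons.injEq] at h
      exact absurd (h.1 ▸ (List.mem_cons_self : x ∈ x :: c)) hc
  | x :: a, b, [], d, h, ha, _ => by
      simp only [List.cons_append, List.nil_append, List.cons.injEq] at h
      exact absurd (h.1 ▸ (List.mem_cons_self : x ∈ x :: a)) ha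
  | x :: a, b, y :: c, d, h, ha, hc => by
      simp only [List.cons_append, List.cons.injEq] at h
      obtain ⟨rfl, h2⟩ := h
      obtain ⟨h3, h4⟩ := split_unique a c h2 (fun hh => ha (List.mem_cons_of_mem _ hh))
        (fun hh => hc (List.mem_cons_of_mem _ hh))
      exact ⟨by rw [h3], h4⟩

variable {V : Type*} [Fintype V] [DecidableEq V] {G : SimpleGraph V} [DecidableRel G.Adj]

noncomputable def uP (hT : G.IsTree) (v w : V) : G.Walk v w :=
  (hT.existsUnique_path v w).choose

lemma uP_isPath (hT : G.IsTree) (v w : V) : (uP hT v w).IsPath :=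
  (hT.existsUnique_path v w).choose_spec.1

lemma uP_unique (hT : G.IsTree) {v w : V} (q : G.Walk v w) (hq : q.IsPath) : q = uP hT v w :=
  (hT.existsUnique_path v w).choose_spec.2 q hq

/-- support of the unique path from `l` to root `r`. -/
noncomputable def f (hT : G.IsTree) (r l : V) : List V := (uP hT l r).support

lemma f_ne_nil (hT : G.IsTree) (r l : V) : f hT r l ≠ [] := Walk.support_ne_nil _

lemma f_head (hT : G.IsTree) (r l : V) : f hT r l = l :: (f hT r l).tail :=
  Walk.support_eq_cons _

lemma mem_f_self (hT : G.IsTree) (r l : V) : l ∈ f hT r l := Walk.start_mem_support _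

lemma f_nodup (hT : G.IsTree) (r l : V) : (f hT r l).Nodup := (uP_isPath hT l r).support_nodup

lemma f_chain' (hT : G.IsTree) (r l : V) : (f hT r l).Chain' G.Adj :=
  Walk.isChain_adj_support _

lemma f_root (hT : G.IsTree) (r : V) : f hT r r = [r] := by
  have : (Walk.nil : G.Walk r r) = uP hT r r := uP_unique hT _ Walk.IsPath.nil
  simp [f, ← this]

lemma f_suffix (hT : G.IsTree) {r l w : V} (hw : w ∈ f hT r l) :
    ∃ A, w ∉ A ∧ f hT r l = A ++ f hT r w := by
  have hw' : w ∈ (uP hT l r).support := hw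
  have hd : ((uP hT l r).dropUntil w hw').IsPath := (uP_isPath hT l r).dropUntil hw'
  have hdu : (uP hT l r).dropUntil w hw' = uP hT w r := uP_unique hT _ hd
  have ht : ((uP hT l r).takeUntil w hw').IsPath := (uP_isPath hT l r).takeUntil hw'
  have hsp : f hT r l =
      ((uP hT l r).takeUntil w hw').support ++ ((uP hT l r).dropUntil w hw').support.tail := by
    conv_lhs => rw [f, ← Walk.take_spec (uP hT l r) hw']
    exact Walk.support_append _ _
  have hTne : ((uP hT l r).takeUntil w hw').support ≠ [] := Walk.support_ne_nil _
  have hlast : ((uP hT l r).takeUntil w hw').support.getLast hTne = w :=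
    Walk.getLast_support _
  have hdecomp : ((uP hT l r).takeUntil w hw').support
      = ((uP hT l r).takeUntil w hw').support.dropLast ++ [w] := by
    conv_lhs => rw [← List.dropLast_append_getLast hTne]
    rw [hlast]
  refine ⟨((uP hT l r).takeUntil w hw').support.dropLast, ?_, ?_⟩
  · have hnd := ht.support_nodup
    rw [hdecomp, List.nodup_append] at hnd
    exact fun hmem => by simpa using hnd.2.2 w hmem w (List.mem_singleton_self w)
  · rw [f_head hT r w, hsp]
    conv_lhs => rw [hdecomp]
    simp only [List.append_assoc, List.singleton_append, f, ← hdu]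


/-- covered-set invariant: closed under taking the path to the root -/
def Inv (f : V → List V) (C : Finset V) : Prop := ∀ w ∈ C, ∀ x ∈ f w, x ∈ C

lemma inv_empty (f : V → List V) : Inv f (∅ : Finset V) := by simp [Inv]

lemma mem_C_or_takeWhile (hT : G.IsTree) {r : V} {C : Finset V} (hInv : Inv (f hT r) C) (l x : V) (hx : x ∈ f hT r l) :
    x ∈ C ∨ x ∈ (f hT r l).takeWhile (· ∉ C) := by
  by_cases hq : x ∈ (f hT r l).takeWhile (· ∉ C)
  · exact Or.inr hq
  left
  have hsplit : (f hT r l).takeWhile (· ∉ C) ++ (f hT r l).dropWhile (· ∉ C) = (f hT r l) :=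
    List.takeWhile_append_dropWhile
  have hrest : x ∈ (f hT r l).dropWhile (· ∉ C) := by
    rw [← hsplit] at hx
    rcases List.mem_append.mp hx with h | h
    · exact absurd h hq
    · exact h
  have hne : (f hT r l).dropWhile (· ∉ C) ≠ [] := List.ne_nil_of_mem hrest
  set w := ((f hT r l).dropWhile (· ∉ C)).head hne with hwdef
  have hwC : w ∈ C := by
    have := List.head_dropWhile_not (fun a => decide (a ∉ C)) hne
    simp only [decide_eq_false_iff_not, not_not] at this
    exact this
  have hdw : (f hT r l).dropWhile (· ∉ C) = w :: ((f hT r l).dropWhile (· ∉ C)).tail :=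
    (List.cons_head_tail hne).symm
  have hwS : w ∈ f hT r l := by
    rw [← hsplit]
    exact List.mem_append_right _ (hdw ▸ List.mem_cons_self)
  obtain ⟨A, hwA, hA⟩ := f_suffix hT hwS
  have hnotq : w ∉ (f hT r l).takeWhile (· ∉ C) := by
    intro h
    have := List.mem_takeWhile_imp h
    simp at this
    exact this hwC
  have h2 : (f hT r l).takeWhile (· ∉ C) ++ w :: ((f hT r l).dropWhile (· ∉ C)).tail
      = A ++ w :: (f hT r w).tail := by
    rw [← hdw, hsplit, hA]
    congr 1
    exact f_head hT r w
  obtain ⟨-, hteq⟩ := split_unique _ _ h2 hnotq hwA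
  have : x ∈ f hT r w := by
    rw [f_head hT r w, ← hteq, ← hdw]
    exact hrest
  exact hInv w hwC x this

lemma inv_step (hT : G.IsTree) {r : V} {C : Finset V} (hInv : Inv (f hT r) C) (l : V) :
    Inv (f hT r) (C ∪ ((f hT r l).takeWhile (· ∉ C)).toFinset) := by
  intro w hw x hx
  rw [Finset.mem_union] at hw ⊢
  rcases hw with hw | hw
  · exact Or.inl (hInv w hw x hx)
  · rw [List.mem_toFinset] at hw
    have hwS : w ∈ f hT r l := (List.takeWhile_sublist _).mem hw
    obtain ⟨A, -, hA⟩ := f_suffix hT hwS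
    have hxl : x ∈ f hT r l := by rw [hA]; exact List.mem_append_right _ hx
    rcases mem_C_or_takeWhile hT hInv l x hxl with h | h
    · exact Or.inl h
    · exact Or.inr (List.mem_toFinset.mpr h)

/-- the greedy path decomposition -/
def build (f : V → List V) : List V → Finset V → List (List V)
  | [], _ => []
  | l :: ls, C =>
    ((f l).takeWhile (· ∉ C)) :: build f ls (C ∪ ((f l).takeWhile (· ∉ C)).toFinset)

lemma build_length (f : V → List V) : ∀ (ls : List V) (C : Finset V),
    (build f ls C).length = ls.length
  | [], _ => rfl
  | l :: ls, C => by simp [build, build_length f ls]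

lemma build_not_mem (f : V → List V) : ∀ (ls : List V) (C : Finset V),
    ∀ q ∈ build f ls C, ∀ x ∈ q, x ∉ C
  | [], _ => by simp [build]
  | l :: ls, C => by
    intro q hq x hxq
    rcases List.mem_cons.mp hq with rfl | hq
    · have := List.mem_takeWhile_imp hxq
      simpa using this
    · intro hxC
      exact build_not_mem f ls _ q hq x hxq (Finset.mem_union_left _ hxC)

lemma build_pairwise (f : V → List V) : ∀ (ls : List V) (C : Finset V),
    (build f ls C).Pairwise (fun a b => ∀ x ∈ a, x ∉ b)
  | [], _ => by simp [build]
  | l :: ls, C => by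
    rw [build, List.pairwise_cons]
    refine ⟨?_, build_pairwise f ls _⟩
    intro q hq x hxtw hxq
    exact build_not_mem f ls _ q hq x hxq
      (Finset.mem_union_right _ (List.mem_toFinset.mpr hxtw))

lemma build_cover (hT : G.IsTree) (r : V) : ∀ (ls : List V) (C : Finset V), Inv (f hT r) C →
    ∀ x : V, x ∉ C → (∃ l ∈ ls, x ∈ f hT r l) →
    ∃ q ∈ build (f hT r) ls C, x ∈ q
  | [], _, _, x, _, h => by simpa using h
  | l :: ls, C, hInv, x, hxC, ⟨l₀, hl₀, hxl₀⟩ => by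
    by_cases hq : x ∈ (f hT r l).takeWhile (· ∉ C)
    · exact ⟨_, List.mem_cons_self, hq⟩
    rcases List.mem_cons.mp hl₀ with rfl | hl₀
    · rcases mem_C_or_takeWhile hT hInv l₀ x hxl₀ with h | h
      · exact absurd h hxC
      · exact absurd h hq
    · obtain ⟨q, hq', hxq⟩ := build_cover hT r ls (C ∪ ((f hT r l).takeWhile (· ∉ C)).toFinset)
        (inv_step hT hInv l) x
        (by
          rw [Finset.mem_union]
          push_neg
          exact ⟨hxC, fun h => hq (List.mem_toFinset.mp h)⟩)
        ⟨l₀, hl₀, hxl₀⟩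
      exact ⟨q, List.mem_cons_of_mem _ hq', hxq⟩


lemma exists_adj (hT : G.IsTree) (hcard : 2 ≤ Fintype.card V) (v : V) :
    ∃ u, G.Adj v u := by
  obtain ⟨w, hw⟩ := Fintype.exists_ne_of_one_lt_card (by omega) v
  obtain ⟨p⟩ := hT.isConnected.preconnected v w
  cases p with
  | nil => exact absurd rfl hw.symm
  | cons h q => exact ⟨_, h⟩

lemma second_vertex (hT : G.IsTree) {v r u : V} (p : G.Walk v r) (hp : p.IsPath)
    (hu : G.Adj v u) (hus : u ∈ p.support) : p.support.tail.head? = some u := by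
  have htw : (p.takeUntil u hus).IsPath := hp.takeUntil hus
  have hedge : (Walk.cons hu Walk.nil : G.Walk v u).IsPath := by
    rw [Walk.cons_isPath_iff]
    exact ⟨Walk.IsPath.nil, by simp [hu.ne]⟩
  have heq : p.takeUntil u hus = Walk.cons hu Walk.nil :=
    (uP_unique hT _ htw).trans (uP_unique hT _ hedge).symm
  have hsp : p.support = (p.takeUntil u hus).support ++ (p.dropUntil u hus).support.tail := by
    conv_lhs => rw [← Walk.take_spec p hus]
    exact Walk.support_append _ _
  rw [heq] at hsp
  simp only [Walk.support_cons, Walk.support_nil] at hsp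
  rw [hsp]
  simp
  rw [← Walk.cons_tail_support (p.dropUntil u hus)]
  rfl

lemma degree_pos (hT : G.IsTree) (hcard : 2 ≤ Fintype.card V) (v : V) :
    1 ≤ G.degree v := by
  obtain ⟨u, hu⟩ := exists_adj hT hcard v
  rw [← SimpleGraph.card_neighborFinset_eq_degree]
  exact Finset.card_pos.mpr ⟨u, (SimpleGraph.mem_neighborFinset G v u).mpr hu⟩

lemma extend_to_leaf (hT : G.IsTree) (hcard : 2 ≤ Fintype.card V) (r : V) :
    ∀ (k : ℕ) (v : V) (p : G.Walk v r), p.IsPath → Fintype.card V - p.length ≤ k →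
      ∃ l, G.degree l = 1 ∧ p.support ⊆ (uP hT l r).support := by
  intro k
  induction k with
  | zero =>
    intro v p hp h0
    exfalso
    have h1 : p.support.length ≤ Fintype.card V := hp.support_nodup.length_le_card
    rw [Walk.length_support] at h1
    omega
  | succ k ih =>
    intro v p hp hk
    by_cases hdeg : G.degree v = 1
    · refine ⟨v, hdeg, ?_⟩
      rw [show p = uP hT v r from uP_unique hT p hp]
      exact fun x hx => hx
    · have h2 : 2 ≤ G.degree v := by
        have := degree_pos hT hcard v
        omega
      have hlen : p.support.length ≤ Fintype.card V := hp.support_nodup.length_le_card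
      rw [Walk.length_support] at hlen
      obtain ⟨u, huv, hus⟩ : ∃ u, G.Adj v u ∧ u ∉ p.support := by
        rw [← SimpleGraph.card_neighborFinset_eq_degree] at h2
        obtain ⟨a, ha, b, hb, hab⟩ := Finset.one_lt_card.mp h2
        rw [SimpleGraph.mem_neighborFinset] at ha hb
        by_contra hcon
        push_neg at hcon
        have h3 := second_vertex hT p hp ha (hcon a ha)
        have h4 := second_vertex hT p hp hb (hcon b hb)
        rw [h3] at h4
        exact hab (Option.some_injective _ h4)
      have hp' : (Walk.cons huv.symm p).IsPath := hp.cons hus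
      obtain ⟨l, hl, hsub⟩ := ih u (Walk.cons huv.symm p) hp' (by
        rw [Walk.length_cons]
        omega)
      refine ⟨l, hl, fun x hx => hsub ?_⟩
      rw [Walk.support_cons]
      exact List.mem_cons_of_mem _ hx

lemma interior_two_le_degree {a r b : V} (p : G.Walk a r) (hp : p.IsPath)
    (hb : b ∈ p.support) (hba : b ≠ a) (hbr : b ≠ r) : 2 ≤ G.degree b := by
  obtain ⟨A, B, hAB⟩ := List.append_of_mem hb
  have hA : A ≠ [] := by
    rintro rfl
    have := p.support_eq_cons
    rw [hAB] at this
    simp at this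
    exact hba this
  have hB : B ≠ [] := by
    rintro rfl
    have hlast : p.support.getLast? = some r := by
      rw [List.getLast?_eq_getLast (Walk.support_ne_nil _), Walk.getLast_support]
    rw [hAB, List.getLast?_concat] at hlast
    exact hbr (Option.some_injective _ hlast)
  have hchain := p.isChain_adj_support
  rw [hAB, List.isChain_append] at hchain
  have hx : G.Adj (A.getLast hA) b := by
    have := hchain.2.2 (A.getLast hA) (List.getLast?_eq_getLast hA) b rfl
    exact this
  have hy : G.Adj b (B.head hB) := by
    have hc := hchain.2.1
    rw [← List.cons_head_tail hB] at hc
    exact hc.rel_head? rfl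
  have hnd := hp.support_nodup
  rw [hAB, List.nodup_append] at hnd
  have hxy : A.getLast hA ≠ B.head hB := by
    intro h
    have h1 : A.getLast hA ∈ A := List.getLast_mem hA
    have h2 : B.head hB ∈ b :: B := List.mem_cons_of_mem _ (List.head_mem hB)
    exact hnd.2.2 _ h1 _ h2 h
  rw [← SimpleGraph.card_neighborFinset_eq_degree]
  apply Finset.one_lt_card.mpr
  exact ⟨_, (SimpleGraph.mem_neighborFinset G b _).mpr hx.symm, _,
    (SimpleGraph.mem_neighborFinset G b _).mpr hy, hxy⟩


lemma build_paths (hT : G.IsTree) (r : V) : ∀ (ls : List V) (C : Finset V),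
    (∀ l ∈ ls, l ∉ C) → ls.Pairwise (fun a b => b ∉ f hT r a) →
    ∀ q ∈ build (f hT r) ls C, IsPathList G q
  | [], _, _, _ => by simp [build]
  | l :: ls, C, hl, hpw => by
    intro q hq
    rcases List.mem_cons.mp hq with rfl | hq
    · refine ⟨?_, ?_, ?_⟩
      · have h0 : l ∉ C := hl l List.mem_cons_self
        have h1 : (f hT r l).takeWhile (· ∉ C)
            = l :: ((f hT r l).tail.takeWhile (· ∉ C)) := by
          conv_lhs => rw [f_head hT r l]
          rw [List.takeWhile_cons_of_pos (by simpa using h0)]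
        exact h1 ▸ List.cons_ne_nil _ _
      · exact (f_nodup hT r l).sublist (List.takeWhile_sublist _)
      · exact (f_chain' hT r l).prefix (List.takeWhile_prefix _)
    · apply build_paths hT r ls _ _ _ q hq
      · intro l' hl'
        rw [Finset.mem_union]
        push_neg
        refine ⟨hl l' (List.mem_cons_of_mem _ hl'), ?_⟩
        intro hmem
        rw [List.mem_toFinset] at hmem
        exact (List.rel_of_pairwise_cons hpw hl') ((List.takeWhile_sublist _).mem hmem)
      · exact hpw.of_cons

end TLP

/-- Every finite tree with at least two vertices and exactly `ℓ` leaves can be partitioned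
into `ℓ` pairwise vertex-disjoint paths. -/
theorem tree_partition_into_leaves_many_paths
    {V : Type*} [Fintype V] [DecidableEq V]
    (G : SimpleGraph V) [DecidableRel G.Adj]
    (hT : G.IsTree) (hcard : 2 ≤ Fintype.card V)
    (ℓ : ℕ) (hℓ : (Finset.univ.filter fun v => G.degree v = 1).card = ℓ) :
    ∃ Q : Fin ℓ → List V,
      (∀ i, IsPathList G (Q i)) ∧
      (∀ i j, i ≠ j → ∀ v, v ∈ Q i → v ∉ Q j) ∧
      (∀ v : V, ∃ i, v ∈ Q i) := by
  classical
  have hne : Nonempty V := Fintype.card_pos_iff.mp (by omega)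
  obtain ⟨v₀⟩ := hne
  obtain ⟨r, hr, -⟩ := TLP.extend_to_leaf hT hcard v₀ (Fintype.card V) v₀ Walk.nil
    Walk.IsPath.nil (by simp)
  set L := (Finset.univ.filter fun v => G.degree v = 1).toList with hL
  have hrL : r ∈ L := by rw [hL, Finset.mem_toList]; simp [hr]
  have hLnd : L.Nodup := Finset.nodup_toList _
  have hLlen : L.length = ℓ := by rw [hL, Finset.length_toList, hℓ]
  set ls := r :: L.erase r with hls
  have hL1 : 1 ≤ L.length := List.length_pos_iff.mpr (List.ne_nil_of_mem hrL)
  have hlslen : ls.length = ℓ := by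
    rw [hls, List.length_cons, List.length_erase_of_mem hrL]
    omega
  have hmemL : ∀ l, G.degree l = 1 → l ∈ L := fun l h => by
    rw [hL, Finset.mem_toList]; simp [h]
  have hlsleaf : ∀ l ∈ ls, G.degree l = 1 := by
    intro l hl
    rcases List.mem_cons.mp hl with rfl | hl
    · exact hr
    · have := (hLnd.mem_erase_iff.mp hl).2
      rw [hL, Finset.mem_toList, Finset.mem_filter] at this
      exact this.2
  have hpw : ls.Pairwise (fun a b => b ∉ TLP.f hT r a) := by
    rw [hls, List.pairwise_cons]
    constructor
    · intro b hb
      rw [TLP.f_root]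
      simpa using (hLnd.mem_erase_iff.mp hb).1
    · refine (hLnd.erase r).imp_of_mem ?_
      intro a b ha hb hne hmem
      have hbr : b ≠ r := (hLnd.mem_erase_iff.mp hb).1
      have hba : b ≠ a := fun h => hne h.symm
      have h2 := TLP.interior_two_le_degree (TLP.uP hT a r) (TLP.uP_isPath hT a r)
        hmem hba hbr
      have h3 := hlsleaf b (List.mem_cons_of_mem _ hb)
      omega
  have hnotC : ∀ l ∈ ls, l ∉ (∅ : Finset V) := by simp
  set Qs := TLP.build (TLP.f hT r) ls ∅ with hQs
  have hQlen : Qs.length = ℓ := by rw [hQs, TLP.build_length, hlslen]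
  have hpaths := TLP.build_paths hT r ls ∅ hnotC hpw
  have hdisj := TLP.build_pairwise (TLP.f hT r) ls ∅
  have hcov : ∀ x : V, ∃ q ∈ Qs, x ∈ q := by
    intro x
    obtain ⟨l, hl1, hsub⟩ := TLP.extend_to_leaf hT hcard r (Fintype.card V) x
      (TLP.uP hT x r) (TLP.uP_isPath hT x r) (by omega)
    have hxl : x ∈ TLP.f hT r l := hsub (Walk.start_mem_support _)
    apply TLP.build_cover hT r ls ∅ (TLP.inv_empty _) x (by simp)
    refine ⟨l, ?_, hxl⟩
    rcases eq_or_ne l r with rfl | hlr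
    · exact List.mem_cons_self
    · exact List.mem_cons_of_mem _ (hLnd.mem_erase_iff.mpr ⟨hlr, hmemL l hl1⟩)
  refine ⟨fun i => Qs[(i : ℕ)]'(by rw [hQlen]; exact i.2), ?_, ?_, ?_⟩
  · intro i
    exact hpaths _ (List.getElem_mem _)
  · intro i j hij v hvi hvj
    have hpg := List.pairwise_iff_getElem.mp hdisj
    rcases lt_or_gt_of_ne (Fin.val_ne_of_ne hij) with h | h
    · exact hpg _ _ _ _ h v hvi hvj
    · exact hpg _ _ _ _ h v hvj hvi
  · intro v
    obtain ⟨q, hq, hvq⟩ := hcov v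
    obtain ⟨i, hi, hqi⟩ := List.getElem_of_mem hq
    exact ⟨⟨i, by omega⟩, by simpa [hqi] using hvq⟩
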